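/- Let Q_r be the r×r matrix with q_{ij} = 2 if i = j, q_{ij} = 1 if i < j, q_{ij} = -1 if i = j+1, and 0 otherwise. Then det(Q_r) = F_{2r+1}, the Fibonacci number with odd index 2r+1. -/

import Mathlib

open Matrix

private def Qm (r : ℕ) : Matrix (Fin r) (Fin r) ℤ :=
  Matrix.of fun i j : Fin r =>
    if (i : ℕ) = (j : ℕ) then 2
    else if (i : ℕ) < (j : ℕ) then 1
    else if (i : ℕ) = (j : ℕ) + 1 then -1
    else (0 : ℤ)

private def Em (r : ℕ) : Matrix (Fin r) (Fin r) ℤ :=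
  Matrix.of fun i j : Fin r => if (i : ℕ) = 0 then 1 else Qm r i j

private lemma coe_succAbove {n : ℕ} (p : Fin (n+1)) (i : Fin n) :
    ((p.succAbove i : ℕ)) = if (i:ℕ) < (p:ℕ) then (i:ℕ) else (i:ℕ)+1 := by
  rw [Fin.succAbove]
  split_ifs with h h' h' <;>
    simp_all [Fin.lt_def, Fin.val_succ, Fin.coe_castSucc]

private lemma sub0Q (r : ℕ) :
    (Qm (r+2)).submatrix ((0 : Fin (r+2)).succAbove) Fin.succ = Qm (r+1) := by
  ext i j
  simp only [Matrix.submatrix_apply, Qm, Matrix.of_apply, coe_succAbove, Fin.val_succ,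
    Fin.val_zero]
  split_ifs <;> grind

private lemma sub1Q (r : ℕ) :
    (Qm (r+2)).submatrix ((1 : Fin (r+2)).succAbove) Fin.succ = Em (r+1) := by
  ext i j
  simp only [Matrix.submatrix_apply, Qm, Em, Matrix.of_apply, coe_succAbove, Fin.val_succ,
    Fin.val_one]
  split_ifs <;> grind

private lemma sub0E (r : ℕ) :
    (Em (r+2)).submatrix ((0 : Fin (r+2)).succAbove) Fin.succ = Qm (r+1) := by
  ext i j
  simp only [Matrix.submatrix_apply, Qm, Em, Matrix.of_apply, coe_succAbove, Fin.val_succ,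
    Fin.val_zero]
  split_ifs <;> grind

private lemma sub1E (r : ℕ) :
    (Em (r+2)).submatrix ((1 : Fin (r+2)).succAbove) Fin.succ = Em (r+1) := by
  ext i j
  simp only [Matrix.submatrix_apply, Qm, Em, Matrix.of_apply, coe_succAbove, Fin.val_succ,
    Fin.val_one]
  split_ifs <;> grind

private lemma det_expand {r : ℕ} (M : Matrix (Fin (r+2)) (Fin (r+2)) ℤ)
    (hz : ∀ i : Fin r, M i.succ.succ 0 = 0) :
    M.det = M 0 0 * (M.submatrix ((0:Fin (r+2)).succAbove) Fin.succ).det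
      - M 1 0 * (M.submatrix ((1:Fin (r+2)).succAbove) Fin.succ).det := by
  rw [Matrix.det_succ_column_zero, Fin.sum_univ_succ, Fin.sum_univ_succ]
  have : ∀ i : Fin r, (-1:ℤ)^((i.succ.succ : Fin (r+2)) : ℕ) * M i.succ.succ 0 *
      ((M.submatrix (i.succ.succ).succAbove Fin.succ).det) = 0 := by
    intro i; rw [hz]; ring
  rw [Finset.sum_congr rfl (fun i _ => this i), Finset.sum_const_zero]
  have h0 : ((0 : Fin (r+2)) : ℕ) = 0 := rfl
  have h1 : (((0 : Fin (r+1)).succ : Fin (r+2)) : ℕ) = 1 := rfl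
  have he : ((0 : Fin (r+1)).succ : Fin (r+2)) = 1 := rfl
  rw [h0, h1, he]
  ring

private lemma key : ∀ r : ℕ, (Qm (r+1)).det = (Nat.fib (2*(r+1)+1) : ℤ) ∧
    (Em (r+1)).det = (Nat.fib (2*(r+1)) : ℤ) := by
  intro r
  induction r with
  | zero =>
    constructor
    · simp [Qm, Matrix.det_fin_one]; decide
    · simp [Em, Matrix.det_fin_one]
  | succ n ih =>
    obtain ⟨hQ, hE⟩ := ih
    have hzQ : ∀ i : Fin n, Qm (n+2) i.succ.succ 0 = 0 := by
      intro i
      simp only [Qm, Matrix.of_apply, Fin.val_succ, Fin.val_zero]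
      split_ifs <;> first | omega | exact ‹False›.elim
    have hzE : ∀ i : Fin n, Em (n+2) i.succ.succ 0 = 0 := by
      intro i
      simp only [Em, Qm, Matrix.of_apply, Fin.val_succ, Fin.val_zero]
      split_ifs <;> first | omega | exact ‹False›.elim
    have e00Q : Qm (n+2) 0 0 = 2 := by simp [Qm]
    have e10Q : Qm (n+2) 1 0 = -1 := by
      simp only [Qm, Matrix.of_apply, Fin.val_one, Fin.val_zero]
      norm_num
    have e00E : Em (n+2) 0 0 = 1 := by simp [Em]
    have e10E : Em (n+2) 1 0 = -1 := by
      simp only [Em, Qm, Matrix.of_apply, Fin.val_one, Fin.val_zero]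
      norm_num
    have goalQ : (Qm (n+2)).det = 2 * (Qm (n+1)).det + (Em (n+1)).det := by
      rw [det_expand _ hzQ, e00Q, e10Q, sub0Q, sub1Q]; ring
    have goalE : (Em (n+2)).det = (Qm (n+1)).det + (Em (n+1)).det := by
      rw [det_expand _ hzE, e00E, e10E, sub0E, sub1E]; ring
    have hfa : 2*(n+1+1)+1 = (2*(n+1)+1)+2 := by ring
    have hfb : 2*(n+1+1) = (2*(n+1))+2 := by ring
    constructor
    · rw [show (n+1+1 : ℕ) = n+2 from rfl] at *
      rw [goalQ, hQ, hE, hfa, Nat.fib_add_two]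
      push_cast
      have := Nat.fib_add_two (n := 2*(n+1))
      push_cast [this]
      ring
    · rw [show (n+1+1 : ℕ) = n+2 from rfl] at *
      rw [goalE, hQ, hE, hfb, Nat.fib_add_two]
      push_cast
      ring

theorem fib_odd_index_det (r : ℕ) :
    Matrix.det (Matrix.of fun i j : Fin r =>
      if (i : ℕ) = (j : ℕ) then 2
      else if (i : ℕ) < (j : ℕ) then 1
      else if (i : ℕ) = (j : ℕ) + 1 then -1
      else (0 : ℤ)) = (Nat.fib (2 * r + 1) : ℤ) := by
  cases r with
  | zero => simp [Matrix.det_fin_zero]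
  | succ n => exact (key n).1
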